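/- Let Δ₆ ⊂ ℝ² be the triangle with vertices (0,0), (7/2,7√3/2), (0,7√3/2), and μ the measure with density [x(−3x/2+√3y/2)(−x/2+√3y/2)(x/2+√3y/2)(3x/2+√3y/2)(√3y)]² on Δ₆. Then the barycenter of Δ₆ with respect to μ equals (139601/79360, 49√3/15). -/

import Mathlib

open MeasureTheory Real

noncomputable def dens (p : ℝ × ℝ) : ℝ :=
  (p.1 * (-3 * p.1 / 2 + Real.sqrt 3 * p.2 / 2) * (-p.1 / 2 + Real.sqrt 3 * p.2 / 2) * (p.1 / 2 + Real.sqrt 3 * p.2 / 2) * (3 * p.1 / 2 + Real.sqrt 3 * p.2 / 2) * (Real.sqrt 3 * p.2)) ^ 2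

namespace G2bary

lemma hs : Real.sqrt 3 * Real.sqrt 3 = 3 := Real.mul_self_sqrt (by norm_num)
lemma hs2 : Real.sqrt 3 ^ 2 = 3 := Real.sq_sqrt (by norm_num)
lemma hs0 : (0:ℝ) ≤ Real.sqrt 3 := Real.sqrt_nonneg 3
lemma hsne : Real.sqrt 3 ≠ 0 := by positivity

def T : Set (ℝ × ℝ) :=
  {p | 0 ≤ p.1 ∧ p.1 ≤ 7/2 ∧ Real.sqrt 3 * p.1 ≤ p.2 ∧ p.2 ≤ 7 * Real.sqrt 3 / 2}

lemma hTclosed : IsClosed T := by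
  have : T = {p : ℝ × ℝ | 0 ≤ p.1} ∩ ({p : ℝ × ℝ | p.1 ≤ 7/2} ∩
      ({p : ℝ × ℝ | Real.sqrt 3 * p.1 ≤ p.2} ∩ {p : ℝ × ℝ | p.2 ≤ 7 * Real.sqrt 3 / 2})) := by
    ext p; simp [T, and_assoc]
  rw [this]
  exact (isClosed_le continuous_const continuous_fst).inter
    ((isClosed_le continuous_fst continuous_const).inter
      ((isClosed_le (continuous_const.mul continuous_fst) continuous_snd).inter
        (isClosed_le continuous_snd continuous_const)))

lemma hTcompact : IsCompact T := by
  apply (isCompact_Icc (a := ((0:ℝ),(0:ℝ))) (b := ((7/2 : ℝ), 7 * Real.sqrt 3 / 2))).of_isClosed_subset hTclosed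
  intro p hp
  obtain ⟨h1, h2, h3, h4⟩ := hp
  exact ⟨⟨h1, le_trans (mul_nonneg hs0 h1) h3⟩, ⟨h2, h4⟩⟩

lemma hull_eq : convexHull ℝ {((0:ℝ), (0:ℝ)), (7/2, 7 * Real.sqrt 3 / 2), (0, 7 * Real.sqrt 3 / 2)} = T := by
  apply le_antisymm
  · apply convexHull_min
    · intro p hp
      simp only [Set.mem_insert_iff, Set.mem_singleton_iff] at hp
      rcases hp with rfl | rfl | rfl
      · refine ⟨le_refl _, by norm_num, by simp, by positivity⟩
      · refine ⟨by norm_num, le_refl _, le_of_eq (by ring), le_refl _⟩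
      · refine ⟨le_refl _, by norm_num, by simpa using by positivity, le_refl _⟩
    · intro p hp q hq a b ha hb hab
      obtain ⟨hp1, hp2, hp3, hp4⟩ := hp
      obtain ⟨hq1, hq2, hq3, hq4⟩ := hq
      refine ⟨?_, ?_, ?_, ?_⟩ <;>
        simp only [Prod.fst_add, Prod.snd_add, Prod.smul_fst, Prod.smul_snd, smul_eq_mul]
      · exact add_nonneg (mul_nonneg ha hp1) (mul_nonneg hb hq1)
      · nlinarith [mul_le_mul_of_nonneg_left hp2 ha, mul_le_mul_of_nonneg_left hq2 hb]
      · nlinarith [mul_le_mul_of_nonneg_left hp3 ha, mul_le_mul_of_nonneg_left hq3 hb]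
      · nlinarith [mul_le_mul_of_nonneg_left hp4 ha, mul_le_mul_of_nonneg_left hq4 hb,
          mul_le_mul_of_nonneg_right (le_of_eq hab) (by positivity : (0:ℝ) ≤ 7 * Real.sqrt 3 / 2)]
  · intro p hp
    obtain ⟨h1, h2, h3, h4⟩ := hp
    have ha : (0:ℝ) ≤ 1 - 2 * Real.sqrt 3 * p.2 / 21 := by
      nlinarith [mul_le_mul_of_nonneg_left h4 hs0, hs]
    have hb : (0:ℝ) ≤ 2 * p.1 / 7 := by linarith
    have hc : (0:ℝ) ≤ 2 * Real.sqrt 3 * p.2 / 21 - 2 * p.1 / 7 := by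
      nlinarith [mul_le_mul_of_nonneg_left h3 hs0, hs]
    have hmem := (convex_convexHull ℝ ({((0:ℝ), (0:ℝ)), (7/2, 7 * Real.sqrt 3 / 2), (0, 7 * Real.sqrt 3 / 2)} : Set (ℝ × ℝ))).sum_mem
      (t := (Finset.univ : Finset (Fin 3)))
      (w := ![1 - 2 * Real.sqrt 3 * p.2 / 21, 2 * p.1 / 7, 2 * Real.sqrt 3 * p.2 / 21 - 2 * p.1 / 7])
      (z := ![((0:ℝ), (0:ℝ)), (7/2, 7 * Real.sqrt 3 / 2), (0, 7 * Real.sqrt 3 / 2)])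
      (by intro i _; fin_cases i <;> simp <;> linarith)
      (by simp [Fin.sum_univ_three]; try ring)
      (by intro i _; fin_cases i <;> apply subset_convexHull <;> simp)
    rw [Fin.sum_univ_three] at hmem
    simp only [Matrix.cons_val_zero, Matrix.cons_val_one, Matrix.head_cons,
      Matrix.cons_val_two, Matrix.tail_cons] at hmem
    have key : p = (1 - 2 * Real.sqrt 3 * p.2 / 21) • ((0:ℝ), (0:ℝ)) +
        (2 * p.1 / 7) • ((7/2 : ℝ), 7 * Real.sqrt 3 / 2) +
        (2 * Real.sqrt 3 * p.2 / 21 - 2 * p.1 / 7) • ((0:ℝ), 7 * Real.sqrt 3 / 2) := by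
      apply Prod.ext
      case fst => simp; try ring
      case snd =>
        simp only [Prod.snd_add, Prod.smul_snd, smul_eq_mul]
        linear_combination (-p.2 / 3) * hs2
    rw [key]; exact hmem

lemma setint (F : ℝ × ℝ → ℝ) (hF : Continuous F) :
    ∫ p in T, F p = ∫ x in (0:ℝ)..(7/2), ∫ y in (Real.sqrt 3 * x)..(7 * Real.sqrt 3 / 2), F (x, y) := by
  have hTm : MeasurableSet T := hTclosed.measurableSet
  have hint : IntegrableOn F T := hF.continuousOn.integrableOn_compact hTcompact
  have hind : Integrable (T.indicator F) := (integrable_indicator_iff hTm).mpr hint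
  rw [← integral_indicator hTm]
  rw [Measure.volume_eq_prod] at hind ⊢
  rw [integral_prod _ hind]
  have key : ∀ x : ℝ, (∫ y, T.indicator F (x, y)) =
      (Set.Icc (0:ℝ) (7/2)).indicator
        (fun x => ∫ y in (Real.sqrt 3 * x)..(7 * Real.sqrt 3 / 2), F (x, y)) x := by
    intro x
    by_cases hx : x ∈ Set.Icc (0:ℝ) (7/2)
    · rw [Set.indicator_of_mem hx]
      have hle : Real.sqrt 3 * x ≤ 7 * Real.sqrt 3 / 2 := by
        nlinarith [mul_le_mul_of_nonneg_left hx.2 hs0]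
      have h1 : (fun y => T.indicator F (x, y)) =
          (Set.Icc (Real.sqrt 3 * x) (7 * Real.sqrt 3 / 2)).indicator (fun y => F (x, y)) := by
        funext y
        by_cases hy : y ∈ Set.Icc (Real.sqrt 3 * x) (7 * Real.sqrt 3 / 2)
        · rw [Set.indicator_of_mem hy, Set.indicator_of_mem (show (x, y) ∈ T from ⟨hx.1, hx.2, hy.1, hy.2⟩)]
        · rw [Set.indicator_of_notMem hy, Set.indicator_of_notMem]
          intro h; exact hy ⟨h.2.2.1, h.2.2.2⟩
      rw [h1, integral_indicator measurableSet_Icc, integral_Icc_eq_integral_Ioc,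
        ← intervalIntegral.integral_of_le hle]
    · rw [Set.indicator_of_notMem hx]
      have h2 : (fun y => T.indicator F (x, y)) = fun _ => (0:ℝ) := by
        funext y; apply Set.indicator_of_notMem
        intro h; exact hx ⟨h.1, h.2.1⟩
      rw [h2, integral_zero]
  simp only [key]
  rw [integral_indicator measurableSet_Icc, integral_Icc_eq_integral_Ioc,
    ← intervalIntegral.integral_of_le (by norm_num : (0:ℝ) ≤ 7/2)]

lemma denskey (x u : ℝ) : dens (x, Real.sqrt 3 * u) =
    729/256*x^10*u^2 - 3645/64*x^8*u^4 + 43011/128*x^6*u^6 - 32805/64*x^4*u^8 + 59049/256*x^2*u^10 := by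
  have h3 : Real.sqrt 3 * (Real.sqrt 3 * u) = 3 * u := by rw [← mul_assoc, hs]
  unfold dens
  dsimp only
  rw [h3]
  ring

lemma inner0 (x : ℝ) : (∫ u in x..(7/2), dens (x, Real.sqrt 3 * u)) =
    116759166847407/5767168*x^2 - 147088897515/32768*x^4 + 5060201139/16384*x^6
      - 12252303/2048*x^8 + 83349/2048*x^10 - 243/154*x^13 := by
  rw [intervalIntegral.integral_congr (g := fun u =>
    729/256*x^10*u^2 - 3645/64*x^8*u^4 + 43011/128*x^6*u^6 - 32805/64*x^4*u^8 + 59049/256*x^2*u^10)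
    (fun u _ => denskey x u)]
  have hd : ∀ u : ℝ, HasDerivAt (fun u : ℝ =>
      243/256*x^10*u^3 - 729/64*x^8*u^5 + 43011/896*x^6*u^7 - 3645/64*x^4*u^9 + 59049/2816*x^2*u^11)
      (729/256*x^10*u^2 - 3645/64*x^8*u^4 + 43011/128*x^6*u^6 - 32805/64*x^4*u^8 + 59049/256*x^2*u^10) u := by
    intro u
    have H := (((((hasDerivAt_pow 3 u).const_mul ((243:ℝ)/256*x^10)).sub
      ((hasDerivAt_pow 5 u).const_mul ((729:ℝ)/64*x^8))).add
      ((hasDerivAt_pow 7 u).const_mul ((43011:ℝ)/896*x^6))).sub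
      ((hasDerivAt_pow 9 u).const_mul ((3645:ℝ)/64*x^4))).add
      ((hasDerivAt_pow 11 u).const_mul ((59049:ℝ)/2816*x^2))
    refine H.congr_deriv ?_
    push_cast
    ring
  rw [intervalIntegral.integral_eq_sub_of_hasDerivAt (fun u _ => hd u)
    ((Continuous.intervalIntegrable (by fun_prop) _ _))]
  ring

lemma inner1 (x : ℝ) : (∫ u in x..(7/2), dens (x, Real.sqrt 3 * u) * u) =
    272438055977283/4194304*x^2 - 1853320108689/131072*x^4 + 247949855811/262144*x^6
      - 142943535/8192*x^8 + 1750329/16384*x^10 - 1215/1024*x^14 := by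
  rw [intervalIntegral.integral_congr (g := fun u =>
    729/256*x^10*u^3 - 3645/64*x^8*u^5 + 43011/128*x^6*u^7 - 32805/64*x^4*u^9 + 59049/256*x^2*u^11)
    (fun u _ => by rw [denskey x u]; ring)]
  have hd : ∀ u : ℝ, HasDerivAt (fun u : ℝ =>
      729/1024*x^10*u^4 - 1215/128*x^8*u^6 + 43011/1024*x^6*u^8 - 6561/128*x^4*u^10 + 19683/1024*x^2*u^12)
      (729/256*x^10*u^3 - 3645/64*x^8*u^5 + 43011/128*x^6*u^7 - 32805/64*x^4*u^9 + 59049/256*x^2*u^11) u := by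
    intro u
    have H := (((((hasDerivAt_pow 4 u).const_mul ((729:ℝ)/1024*x^10)).sub
      ((hasDerivAt_pow 6 u).const_mul ((1215:ℝ)/128*x^8))).add
      ((hasDerivAt_pow 8 u).const_mul ((43011:ℝ)/1024*x^6))).sub
      ((hasDerivAt_pow 10 u).const_mul ((6561:ℝ)/128*x^4))).add
      ((hasDerivAt_pow 12 u).const_mul ((19683:ℝ)/1024*x^2))
    refine H.congr_deriv ?_
    push_cast
    ring
  rw [intervalIntegral.integral_eq_sub_of_hasDerivAt (fun u _ => hd u)
    ((Continuous.intervalIntegrable (by fun_prop) _ _))]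
  ring

lemma outer0 : (∫ x in (0:ℝ)..(7/2),
    (116759166847407/5767168*x^2 - 147088897515/32768*x^4 + 5060201139/16384*x^6
      - 12252303/2048*x^8 + 83349/2048*x^10 - 243/154*x^13)) = 34755472161711/720896 := by
  have hd : ∀ x : ℝ, HasDerivAt (fun x : ℝ =>
      38919722282469/5767168*x^3 - 29417779503/32768*x^5 + 722885877/16384*x^7
        - 1361367/2048*x^9 + 83349/22528*x^11 - 243/2156*x^14)
      (116759166847407/5767168*x^2 - 147088897515/32768*x^4 + 5060201139/16384*x^6
        - 12252303/2048*x^8 + 83349/2048*x^10 - 243/154*x^13) x := by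
    intro x
    have H := ((((((hasDerivAt_pow 3 x).const_mul ((38919722282469:ℝ)/5767168)).sub
      ((hasDerivAt_pow 5 x).const_mul ((29417779503:ℝ)/32768))).add
      ((hasDerivAt_pow 7 x).const_mul ((722885877:ℝ)/16384))).sub
      ((hasDerivAt_pow 9 x).const_mul ((1361367:ℝ)/2048))).add
      ((hasDerivAt_pow 11 x).const_mul ((83349:ℝ)/22528))).sub
      ((hasDerivAt_pow 14 x).const_mul ((243:ℝ)/2156))
    refine H.congr_deriv ?_
    push_cast
    ring
  rw [intervalIntegral.integral_eq_sub_of_hasDerivAt (fun x _ => hd x)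
    ((Continuous.intervalIntegrable (by fun_prop) _ _))]
  norm_num

lemma outer1 : (∫ x in (0:ℝ)..(7/2),
    (116759166847407/5767168*x^3 - 147088897515/32768*x^5 + 5060201139/16384*x^7
      - 12252303/2048*x^9 + 83349/2048*x^11 - 243/154*x^14)) = 14228441845299171/167772160 := by
  have hd : ∀ x : ℝ, HasDerivAt (fun x : ℝ =>
      116759166847407/23068672*x^4 - 49029632505/65536*x^6 + 5060201139/131072*x^8
        - 12252303/20480*x^10 + 27783/8192*x^12 - 81/770*x^15)
      (116759166847407/5767168*x^3 - 147088897515/32768*x^5 + 5060201139/16384*x^7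
        - 12252303/2048*x^9 + 83349/2048*x^11 - 243/154*x^14) x := by
    intro x
    have H := ((((((hasDerivAt_pow 4 x).const_mul ((116759166847407:ℝ)/23068672)).sub
      ((hasDerivAt_pow 6 x).const_mul ((49029632505:ℝ)/65536))).add
      ((hasDerivAt_pow 8 x).const_mul ((5060201139:ℝ)/131072))).sub
      ((hasDerivAt_pow 10 x).const_mul ((12252303:ℝ)/20480))).add
      ((hasDerivAt_pow 12 x).const_mul ((27783:ℝ)/8192))).sub
      ((hasDerivAt_pow 15 x).const_mul ((81:ℝ)/770))
    refine H.congr_deriv ?_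
    push_cast
    ring
  rw [intervalIntegral.integral_eq_sub_of_hasDerivAt (fun x _ => hd x)
    ((Continuous.intervalIntegrable (by fun_prop) _ _))]
  norm_num

lemma outer2 : (∫ x in (0:ℝ)..(7/2),
    (272438055977283/4194304*x^2 - 1853320108689/131072*x^4 + 247949855811/262144*x^6
      - 142943535/8192*x^8 + 1750329/16384*x^10 - 1215/1024*x^14)) = 567672711974613/3604480 := by
  have hd : ∀ x : ℝ, HasDerivAt (fun x : ℝ =>
      90812685325761/4194304*x^3 - 1853320108689/655360*x^5 + 35421407973/262144*x^7
        - 15882615/8192*x^9 + 1750329/180224*x^11 - 81/1024*x^15)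
      (272438055977283/4194304*x^2 - 1853320108689/131072*x^4 + 247949855811/262144*x^6
        - 142943535/8192*x^8 + 1750329/16384*x^10 - 1215/1024*x^14) x := by
    intro x
    have H := ((((((hasDerivAt_pow 3 x).const_mul ((90812685325761:ℝ)/4194304)).sub
      ((hasDerivAt_pow 5 x).const_mul ((1853320108689:ℝ)/655360))).add
      ((hasDerivAt_pow 7 x).const_mul ((35421407973:ℝ)/262144))).sub
      ((hasDerivAt_pow 9 x).const_mul ((15882615:ℝ)/8192))).add
      ((hasDerivAt_pow 11 x).const_mul ((1750329:ℝ)/180224))).sub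
      ((hasDerivAt_pow 15 x).const_mul ((81:ℝ)/1024))
    refine H.congr_deriv ?_
    push_cast
    ring
  rw [intervalIntegral.integral_eq_sub_of_hasDerivAt (fun x _ => hd x)
    ((Continuous.intervalIntegrable (by fun_prop) _ _))]
  norm_num

lemma hdens_cont : Continuous dens := by unfold dens; fun_prop

lemma scale (G : ℝ → ℝ) (x : ℝ) :
    (∫ y in (Real.sqrt 3 * x)..(7 * Real.sqrt 3 / 2), G y) =
      Real.sqrt 3 * ∫ u in x..(7/2), G (Real.sqrt 3 * u) := by
  rw [show (7 * Real.sqrt 3 / 2 : ℝ) = Real.sqrt 3 * (7/2) by ring]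
  rw [← intervalIntegral.smul_integral_comp_mul_left (f := G) (c := Real.sqrt 3)]
  rw [smul_eq_mul]

lemma massval : (∫ p in T, dens p) = Real.sqrt 3 * (34755472161711/720896) := by
  rw [setint dens hdens_cont]
  rw [intervalIntegral.integral_congr (g := fun x => Real.sqrt 3 *
    (116759166847407/5767168*x^2 - 147088897515/32768*x^4 + 5060201139/16384*x^6
      - 12252303/2048*x^8 + 83349/2048*x^10 - 243/154*x^13))
    (fun x _ => by rw [scale (fun y => dens (x, y)) x, inner0 x])]
  rw [intervalIntegral.integral_const_mul, outer0]

lemma vxval : (∫ p in T, dens p * p.1) = Real.sqrt 3 * (14228441845299171/167772160) := by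
  rw [setint (fun p => dens p * p.1) (hdens_cont.mul continuous_fst)]
  rw [intervalIntegral.integral_congr (g := fun x => Real.sqrt 3 *
    (116759166847407/5767168*x^3 - 147088897515/32768*x^5 + 5060201139/16384*x^7
      - 12252303/2048*x^9 + 83349/2048*x^11 - 243/154*x^14))
    (fun x _ => ?_)]
  · rw [intervalIntegral.integral_const_mul, outer1]
  · show (∫ y in (Real.sqrt 3 * x)..(7 * Real.sqrt 3 / 2), dens (x, y) * x) = _
    rw [scale (fun y => dens (x, y) * x) x]
    simp only
    rw [intervalIntegral.integral_mul_const, inner0 x]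
    ring

lemma vyval : (∫ p in T, dens p * p.2) = 3 * (567672711974613/3604480) := by
  rw [setint (fun p => dens p * p.2) (hdens_cont.mul continuous_snd)]
  rw [intervalIntegral.integral_congr (g := fun x => (Real.sqrt 3 * Real.sqrt 3) *
    (272438055977283/4194304*x^2 - 1853320108689/131072*x^4 + 247949855811/262144*x^6
      - 142943535/8192*x^8 + 1750329/16384*x^10 - 1215/1024*x^14))
    (fun x _ => ?_)]
  · rw [hs, intervalIntegral.integral_const_mul, outer2]
  · show (∫ y in (Real.sqrt 3 * x)..(7 * Real.sqrt 3 / 2), dens (x, y) * y) = _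
    rw [scale (fun y => dens (x, y) * y) x]
    have : (∫ u in x..(7/2), dens (x, Real.sqrt 3 * u) * (Real.sqrt 3 * u)) =
        Real.sqrt 3 * ∫ u in x..(7/2), dens (x, Real.sqrt 3 * u) * u := by
      rw [← intervalIntegral.integral_const_mul]
      exact intervalIntegral.integral_congr (fun u _ => by ring)
    rw [this, inner1 x]
    ring

end G2bary

open G2bary in
theorem stmt :
    (∫ p in (convexHull ℝ {((0:ℝ), (0:ℝ)), (7/2, 7 * Real.sqrt 3 / 2), (0, 7 * Real.sqrt 3 / 2)} : Set (ℝ × ℝ)), dens p ∂volume)⁻¹ •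
      (∫ p in (convexHull ℝ {((0:ℝ), (0:ℝ)), (7/2, 7 * Real.sqrt 3 / 2), (0, 7 * Real.sqrt 3 / 2)} : Set (ℝ × ℝ)), dens p • p ∂volume) = ((139601/79360 : ℝ), (49 * Real.sqrt 3 / 15 : ℝ)) := by
  rw [hull_eq]
  have hTm : MeasurableSet T := hTclosed.measurableSet
  have hcont2 : Continuous (fun p : ℝ × ℝ => dens p • p) := hdens_cont.smul continuous_id
  have hint2 : IntegrableOn (fun p : ℝ × ℝ => dens p • p) T :=
    hcont2.continuousOn.integrableOn_compact hTcompact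
  have h1 : (∫ p in T, dens p • p).1 = ∫ p in T, dens p * p.1 := by
    calc (∫ p in T, dens p • p).1
        = (ContinuousLinearMap.fst ℝ ℝ ℝ) (∫ p in T, dens p • p) := rfl
      _ = ∫ p in T, (ContinuousLinearMap.fst ℝ ℝ ℝ) (dens p • p) :=
          (ContinuousLinearMap.integral_comp_comm _ hint2).symm
      _ = ∫ p in T, dens p * p.1 := by simp [smul_eq_mul]
  have h2 : (∫ p in T, dens p • p).2 = ∫ p in T, dens p * p.2 := by
    calc (∫ p in T, dens p • p).2
        = (ContinuousLinearMap.snd ℝ ℝ ℝ) (∫ p in T, dens p • p) := rfl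
      _ = ∫ p in T, (ContinuousLinearMap.snd ℝ ℝ ℝ) (dens p • p) :=
          (ContinuousLinearMap.integral_comp_comm _ hint2).symm
      _ = ∫ p in T, dens p * p.2 := by simp [smul_eq_mul]
  apply Prod.ext
  case fst =>
    rw [Prod.smul_fst, smul_eq_mul, h1, vxval, massval]
    rw [mul_inv]
    have hm : (34755472161711/720896 : ℝ) ≠ 0 := by norm_num
    field_simp
    ring_nf
  case snd =>
    rw [Prod.smul_snd, smul_eq_mul, h2, vyval, massval]
    show _ = 49 * Real.sqrt 3 / 15
    have hinv : (Real.sqrt 3)⁻¹ = Real.sqrt 3 / 3 := by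
      rw [eq_div_iff (by norm_num : (3:ℝ) ≠ 0), inv_mul_eq_div, div_eq_iff hsne]
      linear_combination -hs
    rw [mul_inv, hinv]
    ring_nf
    try norm_num
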